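/- Let X be a complex Banach space and let A, B : X → X be continuous linear operators. Then the Strang splitting error exp(h(A+B)) − exp((h/2)A) · exp(hB) · exp((h/2)A), as a function of h ∈ ℝ, is O(h³) in operator norm as h → 0; i.e. there exist constants C > 0 and δ > 0 such that ‖exp(h(A+B)) − exp((h/2)A) exp(hB) exp((h/2)A)‖ ≤ C |h|³ for all |h| ≤ δ. -/

import Mathlib

set_option maxHeartbeats 1000000

open NormedSpace Nat

private theorem strang_exp_tail {𝔸 : Type*} [NormedRing 𝔸] [NormedAlgebra ℂ 𝔸] [CompleteSpace 𝔸]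
    (M : 𝔸) (hM : ‖M‖ ≤ 1) :
    ‖exp M - (1 + M + (2:ℂ)⁻¹ • (M*M))‖ ≤ 3 * ‖M‖ ^ 3 := by
  have hs : Summable fun n : ℕ => ((n ! : ℂ))⁻¹ • M ^ n := expSeries_summable' (𝕂 := ℂ) M
  have htail := Summable.sum_add_tsum_nat_add (f := fun n : ℕ => ((n ! : ℂ))⁻¹ • M ^ n) 3 hs
  have hpart : ∑ i ∈ Finset.range 3, ((i ! : ℂ))⁻¹ • M ^ i = 1 + M + (2:ℂ)⁻¹ • (M*M) := by
    simp [Finset.sum_range_succ, Nat.factorial, pow_succ]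
  have hexp : exp M = ∑' n : ℕ, ((n ! : ℂ))⁻¹ • M ^ n := by rw [exp_eq_tsum ℂ]
  have key : exp M - (1 + M + (2:ℂ)⁻¹ • (M*M)) = ∑' n : ℕ, (((n+3)! : ℂ))⁻¹ • M ^ (n+3) := by
    rw [hexp, ← htail, hpart, add_sub_cancel_left]
  rw [key]
  have h0 : (0:ℝ) ≤ ‖M‖ := norm_nonneg M
  have hb : ∀ n : ℕ, ‖(((n+3)! : ℂ))⁻¹ • M ^ (n+3)‖ ≤ ‖M‖^3 * ((n ! : ℝ))⁻¹ := by
    intro n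
    rw [norm_smul]
    have h1 : ‖(((n+3)! : ℂ))⁻¹‖ ≤ ((n ! : ℝ))⁻¹ := by
      rw [norm_inv, Complex.norm_natCast]
      apply inv_anti₀
      · positivity
      · exact_mod_cast Nat.factorial_le (by omega)
    have h2 : ‖M ^ (n+3)‖ ≤ ‖M‖^3 := by
      calc ‖M ^ (n+3)‖ ≤ ‖M‖ ^ (n+3) := norm_pow_le' M (by omega)
        _ ≤ ‖M‖ ^ 3 := pow_le_pow_of_le_one h0 hM (by omega)
    calc ‖(((n+3)! : ℂ))⁻¹‖ * ‖M ^ (n+3)‖ ≤ ((n ! : ℝ))⁻¹ * ‖M‖^3 := by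
          apply mul_le_mul h1 h2 (norm_nonneg _) (by positivity)
      _ = ‖M‖^3 * ((n ! : ℝ))⁻¹ := mul_comm _ _
  have hsumf : Summable fun n : ℕ => ((n ! : ℝ))⁻¹ := by
    have := expSeries_summable' (𝕂 := ℝ) (1:ℝ)
    simpa using this
  have hsum2 : Summable fun n : ℕ => ‖M‖^3 * ((n ! : ℝ))⁻¹ := hsumf.mul_left _
  calc ‖∑' n : ℕ, (((n+3)! : ℂ))⁻¹ • M ^ (n+3)‖
      ≤ ∑' n : ℕ, ‖M‖^3 * ((n ! : ℝ))⁻¹ := by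
        apply tsum_of_norm_bounded _ hb
        exact hsum2.hasSum
    _ = ‖M‖^3 * ∑' n : ℕ, ((n ! : ℝ))⁻¹ := by rw [tsum_mul_left]
    _ ≤ 3 * ‖M‖^3 := by
        rw [mul_comm]
        apply mul_le_mul_of_nonneg_right _ (by positivity)
        have : ∑' n : ℕ, ((n ! : ℝ))⁻¹ = Real.exp 1 := by
          rw [Real.exp_eq_exp_ℝ, exp_eq_tsum_div]
          simp [div_eq_mul_inv]
        rw [this]
        exact (Real.exp_one_lt_d9.trans_le (by norm_num)).le

private theorem strang_expand {𝔸 : Type*} [NormedRing 𝔸] [NormedAlgebra ℂ 𝔸] (a b : 𝔸) :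
    (1 + a + (2:ℂ)⁻¹ • (a*a)) * (1 + b + (2:ℂ)⁻¹ • (b*b)) * (1 + a + (2:ℂ)⁻¹ • (a*a))
      = (1 + (a + a + b) + (2:ℂ)⁻¹ • ((a+a+b)*(a+a+b)))
        + (a*b*a + a*a*a
          + (2:ℂ)⁻¹ • (a*a*b) + (2:ℂ)⁻¹ • (b*a*a) + (2:ℂ)⁻¹ • (a*b*b) + (2:ℂ)⁻¹ • (b*b*a)
          + (2:ℂ)⁻¹ • (a*a*b*a) + (2:ℂ)⁻¹ • (a*b*b*a) + (2:ℂ)⁻¹ • (a*b*a*a)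
          + (4:ℂ)⁻¹ • (a*a*b*b) + (4:ℂ)⁻¹ • (b*b*a*a) + (4:ℂ)⁻¹ • (a*a*a*a)
          + (4:ℂ)⁻¹ • (a*a*b*b*a) + (4:ℂ)⁻¹ • (a*a*b*a*a) + (4:ℂ)⁻¹ • (a*b*b*a*a)
          + (8:ℂ)⁻¹ • (a*a*b*b*a*a)) := by
  simp only [mul_add, add_mul, mul_one, one_mul, smul_mul_assoc, mul_smul_comm, smul_smul,
    smul_add, mul_assoc]
  match_scalars <;> ring

/-- The Strang (second-order Split-Step) splitting error is `O(h³)` in operator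
norm: for continuous linear operators `A, B` on a complex Banach space there
exist `C > 0` and `δ > 0` such that
`‖exp(h(A+B)) − exp((h/2)A) exp(hB) exp((h/2)A)‖ ≤ C |h|³` whenever `|h| ≤ δ`. -/
theorem strang_splitting_error_cubic
    {X : Type*} [NormedAddCommGroup X] [NormedSpace ℂ X] [CompleteSpace X]
    (A B : X →L[ℂ] X) :
    ∃ C : ℝ, 0 < C ∧ ∃ δ : ℝ, 0 < δ ∧ ∀ h : ℝ, |h| ≤ δ →
      ‖NormedSpace.exp (h • (A + B))
          - NormedSpace.exp ((h / 2) • A) * NormedSpace.exp (h • B)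
              * NormedSpace.exp ((h / 2) • A)‖
        ≤ C * |h| ^ 3 := by
  set K : ℝ := ‖A‖ + ‖B‖ + 1 with hKdef
  have hK1 : (1:ℝ) ≤ K := by
    have := norm_nonneg A; have := norm_nonneg B; simp only [hKdef]; linarith
  have hK0 : (0:ℝ) < K := by linarith
  refine ⟨208 * K^3, by positivity, 1/K, by positivity, ?_⟩
  intro h hh
  set a : X →L[ℂ] X := (h/2) • A with hadef
  set b : X →L[ℂ] X := h • B with hbdef
  set s : X →L[ℂ] X := h • (A+B) with hsdef
  set m : ℝ := |h| * K with hmdef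
  have hh0 : (0:ℝ) ≤ |h| := abs_nonneg h
  have hm0 : (0:ℝ) ≤ m := by positivity
  have hm1 : m ≤ 1 := by
    rw [hmdef]
    calc |h| * K ≤ (1/K) * K := by gcongr
      _ = 1 := by field_simp
  have hA_le : ‖A‖ ≤ K := by simp only [hKdef]; linarith [norm_nonneg B]
  have hB_le : ‖B‖ ≤ K := by simp only [hKdef]; linarith [norm_nonneg A]
  have hAB_le : ‖A + B‖ ≤ K := (norm_add_le A B).trans (by simp only [hKdef]; linarith)
  have na : ‖a‖ ≤ m := by
    rw [hadef, norm_smul (h/2) A, Real.norm_eq_abs, hmdef]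
    calc |h/2| * ‖A‖ ≤ |h| * K := by
          have hhalf : |h/2| ≤ |h| := by
            rw [abs_div, abs_two]
            linarith [abs_nonneg h]
          exact mul_le_mul hhalf hA_le (norm_nonneg A) hh0
      _ = m := rfl
  have nb : ‖b‖ ≤ m := by
    rw [hbdef, norm_smul h B, Real.norm_eq_abs]
    calc |h| * ‖B‖ ≤ |h| * K := by gcongr
      _ = m := rfl
  have ns : ‖s‖ ≤ m := by
    rw [hsdef, norm_smul h (A+B), Real.norm_eq_abs]
    calc |h| * ‖A + B‖ ≤ |h| * K := by gcongr
      _ = m := rfl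
  have na1 : ‖a‖ ≤ 1 := na.trans hm1
  have nb1 : ‖b‖ ≤ 1 := nb.trans hm1
  have ns1 : ‖s‖ ≤ 1 := ns.trans hm1
  have hm3 : m^3 ≤ 1 := pow_le_one₀ hm0 hm1
  set TA : X →L[ℂ] X := 1 + a + (2:ℂ)⁻¹ • (a*a) with hTAdef
  set TB : X →L[ℂ] X := 1 + b + (2:ℂ)⁻¹ • (b*b) with hTBdef
  set Ts : X →L[ℂ] X := 1 + s + (2:ℂ)⁻¹ • (s*s) with hTsdef
  have hone : ‖(1 : X →L[ℂ] X)‖ ≤ 1 := by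
    rw [ContinuousLinearMap.one_def]; exact ContinuousLinearMap.norm_id_le
  have hc2 : ‖(2:ℂ)⁻¹‖ ≤ 1 := by rw [norm_inv]; norm_num
  have hc4 : ‖(4:ℂ)⁻¹‖ ≤ 1 := by rw [norm_inv]; norm_num
  have hc8 : ‖(8:ℂ)⁻¹‖ ≤ 1 := by rw [norm_inv]; norm_num
  have hsmul : ∀ (c : ℂ) (w : X →L[ℂ] X), ‖c‖ ≤ 1 → ‖c • w‖ ≤ ‖w‖ := by
    intro c w hc
    rw [norm_smul c w]
    calc ‖c‖ * ‖w‖ ≤ 1 * ‖w‖ := by gcongr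
      _ = ‖w‖ := one_mul _
  have hTnorm : ∀ x : X →L[ℂ] X, ‖x‖ ≤ 1 → ‖1 + x + (2:ℂ)⁻¹ • (x*x)‖ ≤ 3 := by
    intro x hx
    calc ‖1 + x + (2:ℂ)⁻¹ • (x*x)‖ ≤ ‖(1:X →L[ℂ] X)‖ + ‖x‖ + ‖(2:ℂ)⁻¹ • (x*x)‖ := norm_add₃_le
      _ ≤ 1 + 1 + ‖x*x‖ := by gcongr; exact hsmul _ _ hc2
      _ ≤ 1 + 1 + 1 := by
          gcongr
          calc ‖x*x‖ ≤ ‖x‖*‖x‖ := norm_mul_le _ _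
            _ ≤ 1*1 := by gcongr
            _ = 1 := one_mul _
      _ = 3 := by norm_num
  have hTA3 : ‖TA‖ ≤ 3 := hTnorm a na1
  have hTB3 : ‖TB‖ ≤ 3 := hTnorm b nb1
  have hRA : ‖NormedSpace.exp a - TA‖ ≤ 3 * m^3 := by
    refine (strang_exp_tail a na1).trans ?_
    gcongr
  have hRB : ‖NormedSpace.exp b - TB‖ ≤ 3 * m^3 := by
    refine (strang_exp_tail b nb1).trans ?_
    gcongr
  have hRs : ‖NormedSpace.exp s - Ts‖ ≤ 3 * m^3 := by
    refine (strang_exp_tail s ns1).trans ?_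
    gcongr
  have heA : ‖NormedSpace.exp a‖ ≤ 6 := by
    calc ‖NormedSpace.exp a‖ = ‖TA + (NormedSpace.exp a - TA)‖ := by rw [add_sub_cancel]
      _ ≤ ‖TA‖ + ‖NormedSpace.exp a - TA‖ := norm_add_le _ _
      _ ≤ 3 + 3 * m^3 := add_le_add hTA3 hRA
      _ ≤ 6 := by nlinarith
  have heB : ‖NormedSpace.exp b‖ ≤ 6 := by
    calc ‖NormedSpace.exp b‖ = ‖TB + (NormedSpace.exp b - TB)‖ := by rw [add_sub_cancel]
      _ ≤ ‖TB‖ + ‖NormedSpace.exp b - TB‖ := norm_add_le _ _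
      _ ≤ 3 + 3 * m^3 := add_le_add hTB3 hRB
      _ ≤ 6 := by nlinarith
  -- bound on product remainder
  have hD : ‖NormedSpace.exp a * NormedSpace.exp b * NormedSpace.exp a - TA * TB * TA‖
      ≤ 189 * m^3 := by
    have hid : NormedSpace.exp a * NormedSpace.exp b * NormedSpace.exp a - TA * TB * TA
        = (NormedSpace.exp a - TA) * (NormedSpace.exp b * NormedSpace.exp a)
          + TA * ((NormedSpace.exp b - TB) * NormedSpace.exp a)
          + (TA * TB) * (NormedSpace.exp a - TA) := by noncomm_ring
    rw [hid]
    have t1 : ‖(NormedSpace.exp a - TA) * (NormedSpace.exp b * NormedSpace.exp a)‖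
        ≤ 108 * m^3 := by
      calc ‖(NormedSpace.exp a - TA) * (NormedSpace.exp b * NormedSpace.exp a)‖
          ≤ ‖NormedSpace.exp a - TA‖ * ‖NormedSpace.exp b * NormedSpace.exp a‖ :=
            norm_mul_le _ _
        _ ≤ (3 * m^3) * (‖NormedSpace.exp b‖ * ‖NormedSpace.exp a‖) := by
            apply mul_le_mul hRA (norm_mul_le _ _) (norm_nonneg _) (by positivity)
        _ ≤ (3 * m^3) * (6 * 6) := by
            apply mul_le_mul_of_nonneg_left _ (by positivity)
            exact mul_le_mul heB heA (norm_nonneg _) (by norm_num)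
        _ = 108 * m^3 := by ring
    have t2 : ‖TA * ((NormedSpace.exp b - TB) * NormedSpace.exp a)‖ ≤ 54 * m^3 := by
      calc ‖TA * ((NormedSpace.exp b - TB) * NormedSpace.exp a)‖
          ≤ ‖TA‖ * ‖(NormedSpace.exp b - TB) * NormedSpace.exp a‖ := norm_mul_le _ _
        _ ≤ 3 * ((3 * m^3) * 6) := by
            apply mul_le_mul hTA3 _ (norm_nonneg _) (by norm_num)
            calc ‖(NormedSpace.exp b - TB) * NormedSpace.exp a‖
                ≤ ‖NormedSpace.exp b - TB‖ * ‖NormedSpace.exp a‖ := norm_mul_le _ _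
              _ ≤ (3 * m^3) * 6 := mul_le_mul hRB heA (norm_nonneg _) (by positivity)
        _ = 54 * m^3 := by ring
    have t3 : ‖(TA * TB) * (NormedSpace.exp a - TA)‖ ≤ 27 * m^3 := by
      calc ‖(TA * TB) * (NormedSpace.exp a - TA)‖
          ≤ ‖TA * TB‖ * ‖NormedSpace.exp a - TA‖ := norm_mul_le _ _
        _ ≤ (3*3) * (3 * m^3) := by
            apply mul_le_mul _ hRA (norm_nonneg _) (by norm_num)
            exact (norm_mul_le _ _).trans (mul_le_mul hTA3 hTB3 (norm_nonneg _) (by norm_num))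
        _ = 27 * m^3 := by ring
    calc ‖_ + _ + _‖ ≤ ‖_ + _‖ + ‖_‖ := norm_add_le _ _
      _ ≤ (‖_‖ + ‖_‖) + ‖_‖ := add_le_add_left (norm_add_le _ _) _
      _ ≤ (108 * m^3 + 54 * m^3) + 27 * m^3 := add_le_add (add_le_add t1 t2) t3
      _ = 189 * m^3 := by ring
  -- word bounds
  have w3 : ∀ x y z : X →L[ℂ] X, ‖x‖ ≤ m → ‖y‖ ≤ m → ‖z‖ ≤ m → ‖x*y*z‖ ≤ m^3 := by
    intro x y z hx hy hz
    calc ‖x*y*z‖ ≤ ‖x*y‖ * ‖z‖ := norm_mul_le _ _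
      _ ≤ (‖x‖*‖y‖) * ‖z‖ := mul_le_mul_of_nonneg_right (norm_mul_le _ _) (norm_nonneg _)
      _ ≤ (m*m) * m := by
          apply mul_le_mul _ hz (norm_nonneg _) (by positivity)
          exact mul_le_mul hx hy (norm_nonneg _) hm0
      _ = m^3 := by ring
  have wext : ∀ w x : X →L[ℂ] X, ‖w‖ ≤ m^3 → ‖x‖ ≤ m → ‖w*x‖ ≤ m^3 := by
    intro w x hw hx
    calc ‖w*x‖ ≤ ‖w‖ * ‖x‖ := norm_mul_le _ _
      _ ≤ m^3 * 1 := mul_le_mul hw (hx.trans hm1) (norm_nonneg _) (by positivity)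
      _ = m^3 := mul_one _
  have hsm3 : ∀ (c : ℂ) (w : X →L[ℂ] X), ‖c‖ ≤ 1 → ‖w‖ ≤ m^3 → ‖c • w‖ ≤ m^3 := by
    intro c w hc hw
    exact (hsmul c w hc).trans hw
  have e1 : ‖a*b*a‖ ≤ m^3 := w3 a b a na nb na
  have e2 : ‖a*a*a‖ ≤ m^3 := w3 a a a na na na
  have e3 : ‖(2:ℂ)⁻¹ • (a*a*b)‖ ≤ m^3 := hsm3 _ _ hc2 (w3 a a b na na nb)
  have e4 : ‖(2:ℂ)⁻¹ • (b*a*a)‖ ≤ m^3 := hsm3 _ _ hc2 (w3 b a a nb na na)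
  have e5 : ‖(2:ℂ)⁻¹ • (a*b*b)‖ ≤ m^3 := hsm3 _ _ hc2 (w3 a b b na nb nb)
  have e6 : ‖(2:ℂ)⁻¹ • (b*b*a)‖ ≤ m^3 := hsm3 _ _ hc2 (w3 b b a nb nb na)
  have e7 : ‖(2:ℂ)⁻¹ • (a*a*b*a)‖ ≤ m^3 := hsm3 _ _ hc2 (wext _ _ (w3 a a b na na nb) na)
  have e8 : ‖(2:ℂ)⁻¹ • (a*b*b*a)‖ ≤ m^3 := hsm3 _ _ hc2 (wext _ _ (w3 a b b na nb nb) na)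
  have e9 : ‖(2:ℂ)⁻¹ • (a*b*a*a)‖ ≤ m^3 := hsm3 _ _ hc2 (wext _ _ (w3 a b a na nb na) na)
  have e10 : ‖(4:ℂ)⁻¹ • (a*a*b*b)‖ ≤ m^3 := hsm3 _ _ hc4 (wext _ _ (w3 a a b na na nb) nb)
  have e11 : ‖(4:ℂ)⁻¹ • (b*b*a*a)‖ ≤ m^3 := hsm3 _ _ hc4 (wext _ _ (w3 b b a nb nb na) na)
  have e12 : ‖(4:ℂ)⁻¹ • (a*a*a*a)‖ ≤ m^3 := hsm3 _ _ hc4 (wext _ _ (w3 a a a na na na) na)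
  have e13 : ‖(4:ℂ)⁻¹ • (a*a*b*b*a)‖ ≤ m^3 :=
    hsm3 _ _ hc4 (wext _ _ (wext _ _ (w3 a a b na na nb) nb) na)
  have e14 : ‖(4:ℂ)⁻¹ • (a*a*b*a*a)‖ ≤ m^3 :=
    hsm3 _ _ hc4 (wext _ _ (wext _ _ (w3 a a b na na nb) na) na)
  have e15 : ‖(4:ℂ)⁻¹ • (a*b*b*a*a)‖ ≤ m^3 :=
    hsm3 _ _ hc4 (wext _ _ (wext _ _ (w3 a b b na nb nb) na) na)
  have e16 : ‖(8:ℂ)⁻¹ • (a*a*b*b*a*a)‖ ≤ m^3 :=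
    hsm3 _ _ hc8 (wext _ _ (wext _ _ (wext _ _ (w3 a a b na na nb) nb) na) na)
  set Δ : X →L[ℂ] X := a*b*a + a*a*a
          + (2:ℂ)⁻¹ • (a*a*b) + (2:ℂ)⁻¹ • (b*a*a) + (2:ℂ)⁻¹ • (a*b*b) + (2:ℂ)⁻¹ • (b*b*a)
          + (2:ℂ)⁻¹ • (a*a*b*a) + (2:ℂ)⁻¹ • (a*b*b*a) + (2:ℂ)⁻¹ • (a*b*a*a)
          + (4:ℂ)⁻¹ • (a*a*b*b) + (4:ℂ)⁻¹ • (b*b*a*a) + (4:ℂ)⁻¹ • (a*a*a*a)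
          + (4:ℂ)⁻¹ • (a*a*b*b*a) + (4:ℂ)⁻¹ • (a*a*b*a*a) + (4:ℂ)⁻¹ • (a*b*b*a*a)
          + (8:ℂ)⁻¹ • (a*a*b*b*a*a) with hΔdef
  have hΔ : ‖Δ‖ ≤ 16 * m^3 := by
    rw [hΔdef]
    have d2 : ‖a*b*a + a*a*a‖ ≤ 2 * m^3 := by
      refine (norm_add_le _ _).trans ?_
      have := e1; have := e2; linarith
    have d3 : ‖a*b*a + a*a*a + (2:ℂ)⁻¹ • (a*a*b)‖ ≤ 3 * m^3 := by
      refine (norm_add_le _ _).trans ?_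
      have := d2; have := e3; linarith
    have d4 : ‖a*b*a + a*a*a + (2:ℂ)⁻¹ • (a*a*b) + (2:ℂ)⁻¹ • (b*a*a)‖ ≤ 4 * m^3 := by
      refine (norm_add_le _ _).trans ?_
      have := d3; have := e4; linarith
    have d5 : ‖a*b*a + a*a*a + (2:ℂ)⁻¹ • (a*a*b) + (2:ℂ)⁻¹ • (b*a*a) + (2:ℂ)⁻¹ • (a*b*b)‖ ≤ 5 * m^3 := by
      refine (norm_add_le _ _).trans ?_
      have := d4; have := e5; linarith
    have d6 : ‖a*b*a + a*a*a + (2:ℂ)⁻¹ • (a*a*b) + (2:ℂ)⁻¹ • (b*a*a) + (2:ℂ)⁻¹ • (a*b*b) + (2:ℂ)⁻¹ • (b*b*a)‖ ≤ 6 * m^3 := by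
      refine (norm_add_le _ _).trans ?_
      have := d5; have := e6; linarith
    have d7 : ‖a*b*a + a*a*a + (2:ℂ)⁻¹ • (a*a*b) + (2:ℂ)⁻¹ • (b*a*a) + (2:ℂ)⁻¹ • (a*b*b) + (2:ℂ)⁻¹ • (b*b*a) + (2:ℂ)⁻¹ • (a*a*b*a)‖ ≤ 7 * m^3 := by
      refine (norm_add_le _ _).trans ?_
      have := d6; have := e7; linarith
    have d8 : ‖a*b*a + a*a*a + (2:ℂ)⁻¹ • (a*a*b) + (2:ℂ)⁻¹ • (b*a*a) + (2:ℂ)⁻¹ • (a*b*b) + (2:ℂ)⁻¹ • (b*b*a) + (2:ℂ)⁻¹ • (a*a*b*a) + (2:ℂ)⁻¹ • (a*b*b*a)‖ ≤ 8 * m^3 := by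
      refine (norm_add_le _ _).trans ?_
      have := d7; have := e8; linarith
    have d9 : ‖a*b*a + a*a*a + (2:ℂ)⁻¹ • (a*a*b) + (2:ℂ)⁻¹ • (b*a*a) + (2:ℂ)⁻¹ • (a*b*b) + (2:ℂ)⁻¹ • (b*b*a) + (2:ℂ)⁻¹ • (a*a*b*a) + (2:ℂ)⁻¹ • (a*b*b*a) + (2:ℂ)⁻¹ • (a*b*a*a)‖ ≤ 9 * m^3 := by
      refine (norm_add_le _ _).trans ?_
      have := d8; have := e9; linarith
    have d10 : ‖a*b*a + a*a*a + (2:ℂ)⁻¹ • (a*a*b) + (2:ℂ)⁻¹ • (b*a*a) + (2:ℂ)⁻¹ • (a*b*b) + (2:ℂ)⁻¹ • (b*b*a) + (2:ℂ)⁻¹ • (a*a*b*a) + (2:ℂ)⁻¹ • (a*b*b*a) + (2:ℂ)⁻¹ • (a*b*a*a) + (4:ℂ)⁻¹ • (a*a*b*b)‖ ≤ 10 * m^3 := by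
      refine (norm_add_le _ _).trans ?_
      have := d9; have := e10; linarith
    have d11 : ‖a*b*a + a*a*a + (2:ℂ)⁻¹ • (a*a*b) + (2:ℂ)⁻¹ • (b*a*a) + (2:ℂ)⁻¹ • (a*b*b) + (2:ℂ)⁻¹ • (b*b*a) + (2:ℂ)⁻¹ • (a*a*b*a) + (2:ℂ)⁻¹ • (a*b*b*a) + (2:ℂ)⁻¹ • (a*b*a*a) + (4:ℂ)⁻¹ • (a*a*b*b) + (4:ℂ)⁻¹ • (b*b*a*a)‖ ≤ 11 * m^3 := by
      refine (norm_add_le _ _).trans ?_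
      have := d10; have := e11; linarith
    have d12 : ‖a*b*a + a*a*a + (2:ℂ)⁻¹ • (a*a*b) + (2:ℂ)⁻¹ • (b*a*a) + (2:ℂ)⁻¹ • (a*b*b) + (2:ℂ)⁻¹ • (b*b*a) + (2:ℂ)⁻¹ • (a*a*b*a) + (2:ℂ)⁻¹ • (a*b*b*a) + (2:ℂ)⁻¹ • (a*b*a*a) + (4:ℂ)⁻¹ • (a*a*b*b) + (4:ℂ)⁻¹ • (b*b*a*a) + (4:ℂ)⁻¹ • (a*a*a*a)‖ ≤ 12 * m^3 := by
      refine (norm_add_le _ _).trans ?_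
      have := d11; have := e12; linarith
    have d13 : ‖a*b*a + a*a*a + (2:ℂ)⁻¹ • (a*a*b) + (2:ℂ)⁻¹ • (b*a*a) + (2:ℂ)⁻¹ • (a*b*b) + (2:ℂ)⁻¹ • (b*b*a) + (2:ℂ)⁻¹ • (a*a*b*a) + (2:ℂ)⁻¹ • (a*b*b*a) + (2:ℂ)⁻¹ • (a*b*a*a) + (4:ℂ)⁻¹ • (a*a*b*b) + (4:ℂ)⁻¹ • (b*b*a*a) + (4:ℂ)⁻¹ • (a*a*a*a) + (4:ℂ)⁻¹ • (a*a*b*b*a)‖ ≤ 13 * m^3 := by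
      refine (norm_add_le _ _).trans ?_
      have := d12; have := e13; linarith
    have d14 : ‖a*b*a + a*a*a + (2:ℂ)⁻¹ • (a*a*b) + (2:ℂ)⁻¹ • (b*a*a) + (2:ℂ)⁻¹ • (a*b*b) + (2:ℂ)⁻¹ • (b*b*a) + (2:ℂ)⁻¹ • (a*a*b*a) + (2:ℂ)⁻¹ • (a*b*b*a) + (2:ℂ)⁻¹ • (a*b*a*a) + (4:ℂ)⁻¹ • (a*a*b*b) + (4:ℂ)⁻¹ • (b*b*a*a) + (4:ℂ)⁻¹ • (a*a*a*a) + (4:ℂ)⁻¹ • (a*a*b*b*a) + (4:ℂ)⁻¹ • (a*a*b*a*a)‖ ≤ 14 * m^3 := by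
      refine (norm_add_le _ _).trans ?_
      have := d13; have := e14; linarith
    have d15 : ‖a*b*a + a*a*a + (2:ℂ)⁻¹ • (a*a*b) + (2:ℂ)⁻¹ • (b*a*a) + (2:ℂ)⁻¹ • (a*b*b) + (2:ℂ)⁻¹ • (b*b*a) + (2:ℂ)⁻¹ • (a*a*b*a) + (2:ℂ)⁻¹ • (a*b*b*a) + (2:ℂ)⁻¹ • (a*b*a*a) + (4:ℂ)⁻¹ • (a*a*b*b) + (4:ℂ)⁻¹ • (b*b*a*a) + (4:ℂ)⁻¹ • (a*a*a*a) + (4:ℂ)⁻¹ • (a*a*b*b*a) + (4:ℂ)⁻¹ • (a*a*b*a*a) + (4:ℂ)⁻¹ • (a*b*b*a*a)‖ ≤ 15 * m^3 := by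
      refine (norm_add_le _ _).trans ?_
      have := d14; have := e15; linarith
    have d16 : ‖a*b*a + a*a*a + (2:ℂ)⁻¹ • (a*a*b) + (2:ℂ)⁻¹ • (b*a*a) + (2:ℂ)⁻¹ • (a*b*b) + (2:ℂ)⁻¹ • (b*b*a) + (2:ℂ)⁻¹ • (a*a*b*a) + (2:ℂ)⁻¹ • (a*b*b*a) + (2:ℂ)⁻¹ • (a*b*a*a) + (4:ℂ)⁻¹ • (a*a*b*b) + (4:ℂ)⁻¹ • (b*b*a*a) + (4:ℂ)⁻¹ • (a*a*a*a) + (4:ℂ)⁻¹ • (a*a*b*b*a) + (4:ℂ)⁻¹ • (a*a*b*a*a) + (4:ℂ)⁻¹ • (a*b*b*a*a) + (8:ℂ)⁻¹ • (a*a*b*b*a*a)‖ ≤ 16 * m^3 := by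
      refine (norm_add_le _ _).trans ?_
      have := d15; have := e16; linarith
    exact d16
  have hs_eq : a + a + b = s := by
    rw [hadef, hbdef, hsdef]
    module
  have hPident : TA * TB * TA = Ts + Δ := by
    rw [hTAdef, hTBdef, hTsdef, hΔdef, ← hs_eq]
    exact strang_expand a b
  have hsplit : NormedSpace.exp s
        - NormedSpace.exp a * NormedSpace.exp b * NormedSpace.exp a
      = (NormedSpace.exp s - Ts) - Δ
        - (NormedSpace.exp a * NormedSpace.exp b * NormedSpace.exp a - TA * TB * TA) := by
    rw [hPident]; abel
  calc ‖NormedSpace.exp (h • (A + B))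
          - NormedSpace.exp ((h / 2) • A) * NormedSpace.exp (h • B)
              * NormedSpace.exp ((h / 2) • A)‖
      = ‖(NormedSpace.exp s - Ts) - Δ
          - (NormedSpace.exp a * NormedSpace.exp b * NormedSpace.exp a - TA * TB * TA)‖ := by
        rw [← hsplit]
    _ ≤ ‖(NormedSpace.exp s - Ts) - Δ‖
          + ‖NormedSpace.exp a * NormedSpace.exp b * NormedSpace.exp a - TA * TB * TA‖ :=
        norm_sub_le _ _
    _ ≤ (‖NormedSpace.exp s - Ts‖ + ‖Δ‖)
          + ‖NormedSpace.exp a * NormedSpace.exp b * NormedSpace.exp a - TA * TB * TA‖ :=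
        add_le_add_left (norm_sub_le _ _) _
    _ ≤ (3 * m^3 + 16 * m^3) + 189 * m^3 := add_le_add (add_le_add hRs hΔ) hD
    _ = 208 * m^3 := by ring
    _ = 208 * K^3 * |h|^3 := by rw [hmdef]; ring
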